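/- Let b be any tuple and p a global A-invariant generically stable type. Then there is a Morley sequence ā of p over A such that for any a ⊨ p↾A: if a ⊨ p↾A ā then a ⊨ p↾Ab. (Such an ā is called a p-basis for b over A.) -/

import Mathlib

set_option autoImplicit false

open FirstOrder FirstOrder.Language Set Cardinal

namespace Paper

/-- The cardinality `|T|` of the theory: the cardinality of the language plus `ℵ₀`. -/
noncomputable def theoryCard (L : FirstOrder.Language.{0,0}) : Cardinal :=
  L.card + Cardinal.aleph0

variable (L : FirstOrder.Language.{0,0}) (M : Type) [L.Structure M]

/-- `a` and `b` have the same type over the parameter set `A`. -/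
def EqTp (A : Set M) {γ : Type} (a b : γ → M) : Prop :=
  ∀ φ : L.Formula (↥A ⊕ γ),
    φ.Realize (Sum.elim Subtype.val a) ↔ φ.Realize (Sum.elim Subtype.val b)

/-- A formula with parameters from `M` is over the set `B`. -/
def FormulaOver (B : Set M) {γ : Type} (φ : L.Formula (M ⊕ γ)) : Prop :=
  ∃ ψ : L.Formula (↥B ⊕ γ), ψ.relabel (Sum.map Subtype.val id) = φ

/-- A complete global type (in variables indexed by `γ`): a maximal set of formulas with
parameters in the monster model which is finitely satisfiable in it. -/
def IsGlobalType {γ : Type} (p : Set (L.Formula (M ⊕ γ))) : Prop :=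
  (∀ s : Finset (L.Formula (M ⊕ γ)), ↑s ⊆ p →
    ∃ v : γ → M, ∀ φ ∈ s, φ.Realize (Sum.elim id v)) ∧
  (∀ φ : L.Formula (M ⊕ γ), φ ∈ p ∨ BoundedFormula.not φ ∈ p)

/-- `a` realizes the restriction `p ↾ B` of the set of formulas `p` to the parameter set `B`. -/
def RealizesRes {γ : Type} (p : Set (L.Formula (M ⊕ γ))) (B : Set M) (a : γ → M) : Prop :=
  ∀ φ ∈ p, FormulaOver L M B φ → φ.Realize (Sum.elim id a)

/-- The automorphism `σ` fixes `A` pointwise. -/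
def FixesPointwise (A : Set M) (σ : M ≃[L] M) : Prop := ∀ x ∈ A, σ x = x

/-- The global type `p` is `Aut(M/A)`-invariant. -/
def InvariantOver {γ : Type} (p : Set (L.Formula (M ⊕ γ))) (A : Set M) : Prop :=
  ∀ σ : M ≃[L] M, FixesPointwise L M A σ →
    ∀ φ : L.Formula (M ⊕ γ), φ ∈ p ↔ φ.relabel (Sum.map (fun x => σ x) id) ∈ p

/-- Definable closure. -/
def dcl (A : Set M) : Set M :=
  {x | ∃ φ : L.Formula (↥A ⊕ Unit),
    ∀ y : M, (φ.Realize (Sum.elim Subtype.val fun _ => y) ↔ y = x)}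

/-- Algebraic closure. -/
def acl (A : Set M) : Set M :=
  {x | ∃ φ : L.Formula (↥A ⊕ Unit),
    {y : M | φ.Realize (Sum.elim Subtype.val fun _ => y)}.Finite ∧
    φ.Realize (Sum.elim Subtype.val fun _ => x)}

/-- The tuple `e` is in the definable closure of `A`. -/
def InDclT {n : ℕ} (A : Set M) (e : Fin n → M) : Prop :=
  ∃ φ : L.Formula (↥A ⊕ Fin n),
    ∀ y : Fin n → M, (φ.Realize (Sum.elim Subtype.val y) ↔ y = e)

/-- `M` is a monster model (with respect to the bound `κ`): it is `κ`-saturated and strongly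
`κ`-homogeneous. -/
structure IsMonster (κ : Cardinal) : Prop where
  saturated : ∀ A : Set M, #A < κ → ∀ (n : ℕ) (p : Set (L.Formula (↥A ⊕ Fin n))),
    (∀ s : Finset (L.Formula (↥A ⊕ Fin n)), ↑s ⊆ p →
      ∃ v : Fin n → M, ∀ φ ∈ s, φ.Realize (Sum.elim Subtype.val v)) →
    ∃ v : Fin n → M, ∀ φ ∈ p, φ.Realize (Sum.elim Subtype.val v)
  homogeneous : ∀ (A : Set M) (β : Type) (a b : β → M), #A < κ → #β < κ →
    EqTp L M A a b →
    ∃ σ : M ≃[L] M, FixesPointwise L M A σ ∧ ∀ i, σ (a i) = b i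

/-- The instance `φ(x, b)` divides over `A`:  there are `b_i ≡_A b` such that
`{φ(x,b_i) : i < ω}` is `k`-inconsistent. -/
def DividesOver {γ β : Type} (φ : L.Formula (γ ⊕ β)) (b : β → M) (A : Set M) : Prop :=
  ∃ (bs : ℕ → β → M) (k : ℕ), 0 < k ∧ (∀ i, EqTp L M A (bs i) b) ∧
    ∀ s : Finset ℕ, s.card = k →
      ¬ ∃ x : γ → M, ∀ i ∈ s, φ.Realize (Sum.elim x (bs i))

/-- `tp(a/B)` divides over `A`. -/
def TpDividesOver {γ : Type} (a : γ → M) (B A : Set M) : Prop :=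
  ∃ (n : ℕ) (φ : L.Formula (γ ⊕ Fin n)) (b : Fin n → M),
    (∀ i, b i ∈ B) ∧ φ.Realize (Sum.elim a b) ∧ DividesOver L M φ b A

/-- `tp(a/B)` forks over `A`: some formula of it implies a finite disjunction of formulas,
each of which divides over `A`. -/
def TpForksOver {γ : Type} (a : γ → M) (B A : Set M) : Prop :=
  ∃ (n : ℕ) (φ : L.Formula (γ ⊕ Fin n)) (b : Fin n → M),
    (∀ i, b i ∈ B) ∧ φ.Realize (Sum.elim a b) ∧
    ∃ (m : ℕ) (k : Fin m → ℕ) (ψ : (j : Fin m) → L.Formula (γ ⊕ Fin (k j)))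
      (c : (j : Fin m) → Fin (k j) → M),
      (∀ j, DividesOver L M (ψ j) (c j) A) ∧
      ∀ x : γ → M, φ.Realize (Sum.elim x b) → ∃ j, (ψ j).Realize (Sum.elim x (c j))

/-- The set `X` is forking-independent from the set `Y` over `A` (every finite tuple from `X`
has a type over `A ∪ Y` which does not fork over `A`). -/
def SetForkIndep (X Y A : Set M) : Prop :=
  ∀ (n : ℕ) (x : Fin n → M), (∀ i, x i ∈ X) → ¬ TpForksOver L M x (A ∪ Y) A

/-- A sequence of tuples, indexed by the order `(I, r)`, is indiscernible over `A`. -/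
def Indiscernible (A : Set M) {I γ : Type} (r : I → I → Prop) (b : I → γ → M) : Prop :=
  ∀ (n : ℕ) (s t : Fin n → I),
    (∀ i j : Fin n, i < j → r (s i) (s j)) →
    (∀ i j : Fin n, i < j → r (t i) (t j)) →
    EqTp L M A (fun q : Fin n × γ => b (s q.1) q.2) (fun q : Fin n × γ => b (t q.1) q.2)

/-- The set of coordinates of the tuples appearing strictly before index `i`. -/
def seqBefore (M : Type) {I γ : Type} (r : I → I → Prop) (b : I → γ → M) (i : I) : Set M :=
  ⋃ j ∈ {j : I | r j i}, Set.range (b j)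

/-- `(e_i)_{i ∈ I}` is a Morley sequence of `p` over `A` : `e_i ⊨ p ↾ (A e_{<i})`. -/
def MorleySeqOver {γ I : Type} (p : Set (L.Formula (M ⊕ γ))) (A : Set M)
    (r : I → I → Prop) (e : I → γ → M) : Prop :=
  ∀ i : I, RealizesRes L M p (A ∪ seqBefore M r e i) (e i)

/-- A family of tuples is `acl`-independent over `B`. -/
def AclIndepFamily (B : Set M) {I γ : Type} (b : I → γ → M) : Prop :=
  ∀ J J' : Set I, Disjoint J J' →
    acl L M (B ∪ ⋃ j ∈ J, Set.range (b j)) ∩ acl L M (B ∪ ⋃ j ∈ J', Set.range (b j))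
      ⊆ acl L M B

/-- The global type `p` is generically stable over `A`. -/
def GenericallyStable {γ : Type} (p : Set (L.Formula (M ⊕ γ))) (A : Set M) : Prop :=
  InvariantOver L M p A ∧
  ∀ (I : Type) (r : I → I → Prop), IsWellOrder I r → Infinite I →
    ∀ e : I → γ → M, MorleySeqOver L M p A r e →
      ∀ φ : L.Formula (M ⊕ γ),
        {i : I | φ.Realize (Sum.elim id (e i))}.Finite ∨
        {i : I | ¬ φ.Realize (Sum.elim id (e i))}.Finite

/-- `d = (d_0, …, d_{n-1})` realizes the restriction `p^{⊗n} ↾ B`. -/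
def RealizesTensorRes {γ : Type} (p : Set (L.Formula (M ⊕ γ))) (B : Set M)
    {n : ℕ} (d : Fin n → γ → M) : Prop :=
  ∀ i : Fin n, RealizesRes L M p (B ∪ ⋃ j ∈ {j : Fin n | j < i}, Set.range (d j)) (d i)

/-- The tensor power `p^{⊗n}` is generically stable over `A`. -/
def TensorGenStable {γ : Type} (p : Set (L.Formula (M ⊕ γ))) (A : Set M) (n : ℕ) : Prop :=
  ∀ (I : Type) (r : I → I → Prop), IsWellOrder I r → Infinite I →
    ∀ d : I → Fin n → γ → M,
      (∀ i : I, RealizesTensorRes L M p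
        (A ∪ ⋃ j ∈ {j : I | r j i}, ⋃ k : Fin n, Set.range (d j k)) (d i)) →
      ∀ φ : L.Formula (M ⊕ (Fin n × γ)),
        {i : I | φ.Realize (Sum.elim id fun q => d i q.1 q.2)}.Finite ∨
        {i : I | ¬ φ.Realize (Sum.elim id fun q => d i q.1 q.2)}.Finite

/-- `a ⫝^p_A b` : for every `d̄ ⊨ p^{⊗n}↾A` there is `d̄' ≡_{Aa} d̄` with `d̄' ⊨ p^{⊗n}↾Ab`. -/
def PIndep {γ α β : Type} (p : Set (L.Formula (M ⊕ γ))) (A : Set M)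
    (a : α → M) (b : β → M) : Prop :=
  ∀ (n : ℕ) (d : Fin n → γ → M), RealizesTensorRes L M p A d →
    ∃ d' : Fin n → γ → M,
      EqTp L M (A ∪ Set.range a) (fun q : Fin n × γ => d q.1 q.2)
        (fun q : Fin n × γ => d' q.1 q.2) ∧
      RealizesTensorRes L M p (A ∪ Set.range b) d'

/-- A partial type (with parameters in `M`) is ind-definable over `A`. -/
def IndDefinableOver {γ : Type} (π : Set (L.Formula (M ⊕ γ))) (A : Set M) : Prop :=
  ∀ (n : ℕ) (φ : L.Formula (Fin n ⊕ γ)),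
    ∃ (ι : Type) (S : ι → Set (Fin n → M)),
      (∀ i, Set.Definable A L (S i)) ∧
      {b : Fin n → M |
        φ.relabel (Sum.elim (fun i => (Sum.inl (b i) : M ⊕ γ)) Sum.inr) ∈ π} = ⋃ i, S i

/-- A partial type is generically stable over `A`. -/
def GSPartialType {γ : Type} (π : Set (L.Formula (M ⊕ γ))) (A : Set M) : Prop :=
  IndDefinableOver L M π A ∧
  ∀ a : ℕ → γ → M,
    (∀ k : ℕ, RealizesRes L M π (A ∪ ⋃ j ∈ {j : ℕ | j < k}, Set.range (a j)) (a k)) →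
    ∀ φ ∈ π, {k : ℕ | ¬ φ.Realize (Sum.elim id (a k))}.Finite

/-- `a ⫝^{GS}_A b`. -/
def GSIndep {α β : Type} (A : Set M) (a : α → M) (b : β → M) : Prop :=
  ∀ π : Set (L.Formula (M ⊕ β)), GSPartialType L M π A →
    RealizesRes L M π A b → RealizesRes L M π (A ∪ Set.range a) b

/-- An `∅`-definable graph. -/
structure ZeroDefGraph : Type where
  V : Set M
  E : Set (M × M)
  defV : Set.Definable₁ (∅ : Set M) L V
  defE : Set.Definable₂ (∅ : Set M) L E

/-- There is a path of length `n` between `x` and `y` in the graph `G`. -/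
def GPath (G : ZeroDefGraph L M) (n : ℕ) (x y : M) : Prop :=
  ∃ f : ℕ → M, f 0 = x ∧ f n = y ∧ (∀ i ≤ n, f i ∈ G.V) ∧
    ∀ i < n, ((f i, f (i+1)) ∈ G.E ∨ (f (i+1), f i) ∈ G.E)

/-- `dist_G(x,y) ≤ n`. -/
def DistLe (G : ZeroDefGraph L M) (n : ℕ) (x y : M) : Prop := ∃ m ≤ n, GPath L M G m x y

/-- `x` and `y` lie in the same connected component of `G`. -/
def SameComp (G : ZeroDefGraph L M) (x y : M) : Prop := ∃ n : ℕ, GPath L M G n x y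

/-- The connected component `[a]` of `G` is `∨`-definable over `B`. -/
def VDef (G : ZeroDefGraph L M) (B : Set M) (a : M) : Prop :=
  ∀ σ : M ≃[L] M, FixesPointwise L M B σ → SameComp L M G a (σ a)

/-- The connected component `[a]` of `G` is `∨`-algebraic over `B`. -/
def VAlg (G : ZeroDefGraph L M) (B : Set M) (a : M) : Prop :=
  ∃ (n : ℕ) (c : Fin n → M), ∀ σ : M ≃[L] M, FixesPointwise L M B σ →
    ∃ i, SameComp L M G (σ a) (c i)

/-- `a ⫝^{acl∨}_A b` : `acl^∨(Aa) ∩ acl^∨(Ab) = acl^∨(A)`. -/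
def AclVIndep (A : Set M) {α β : Type} (a : α → M) (b : β → M) : Prop :=
  ∀ (G : ZeroDefGraph L M) (x : M), x ∈ G.V →
    ((VAlg L M G (A ∪ Set.range a) x ∧ VAlg L M G (A ∪ Set.range b) x) ↔ VAlg L M G A x)

/-- `a ⫝^{dcl∨}_A b` : `dcl^∨(Aa) ∩ dcl^∨(Ab) ⊆ dcl^∨(A)`. -/
def DclVIndep (A : Set M) {α β : Type} (a : α → M) (b : β → M) : Prop :=
  ∀ (G : ZeroDefGraph L M) (x : M), x ∈ G.V →
    VDef L M G (A ∪ Set.range a) x → VDef L M G (A ∪ Set.range b) x → VDef L M G A x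

/-- `a ⫝^{acl}_A b` : `acl(Aa) ∩ acl(Ab) ⊆ acl(A)`. -/
def AclIndepPair (A : Set M) {α β : Type} (a : α → M) (b : β → M) : Prop :=
  acl L M (A ∪ Set.range a) ∩ acl L M (A ∪ Set.range b) ⊆ acl L M A

/-- A subset `D ⊆ M` is stable: no formula has the order property on `D`. -/
def StableSet1 (D : Set M) : Prop :=
  ∀ (j l : ℕ) (φ : L.Formula (M ⊕ (Fin j ⊕ Fin l))),
    ¬ ∃ (a : ℕ → Fin j → M) (b : ℕ → Fin l → M),
      (∀ i r, a i r ∈ D) ∧ (∀ i r, b i r ∈ D) ∧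
      ∀ i k : ℕ, (φ.Realize (Sum.elim id (Sum.elim (a i) (b k))) ↔ i < k)

/-- The theory is stable. -/
def IsStableTheory : Prop := StableSet1 L M Set.univ

/-- A subset `D ⊆ M^n` is stable: no formula has the order property on `D`. -/
def StableSetT {n : ℕ} (D : Set (Fin n → M)) : Prop :=
  ∀ (j l : ℕ) (φ : L.Formula (M ⊕ ((Fin j × Fin n) ⊕ (Fin l × Fin n)))),
    ¬ ∃ (a : ℕ → Fin j → Fin n → M) (b : ℕ → Fin l → Fin n → M),
      (∀ i r, a i r ∈ D) ∧ (∀ i r, b i r ∈ D) ∧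
      ∀ i k : ℕ,
        (φ.Realize (Sum.elim id
          (Sum.elim (fun q => a i q.1 q.2) (fun q => b k q.1 q.2))) ↔ i < k)

/-- The set of coordinates of the tuples in `D`. -/
def coordsOf (M : Type) {n : ℕ} (D : Set (Fin n → M)) : Set M := {x | ∃ v ∈ D, ∃ i, v i = x}

/-- A `C`-definable subset `D ⊆ M` is stably embedded: every `M`-definable subset of a power of
`D` coincides on `D` with one definable with parameters from `D ∪ C`. -/
def StablyEmbedded1 (C : Set M) (D : Set M) : Prop :=
  ∀ (n : ℕ) (S : Set (Fin n → M)), Set.Definable (Set.univ : Set M) L S →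
    ∃ S' : Set (Fin n → M), Set.Definable (D ∪ C) L S' ∧
      ∀ v : Fin n → M, (∀ i, v i ∈ D) → (v ∈ S ↔ v ∈ S')

/-- A `C`-definable subset `D ⊆ M^m` is stably embedded. -/
def StablyEmbeddedT (C : Set M) {m : ℕ} (D : Set (Fin m → M)) : Prop :=
  ∀ (j : ℕ) (S : Set (Fin j × Fin m → M)), Set.Definable (Set.univ : Set M) L S →
    ∃ S' : Set (Fin j × Fin m → M), Set.Definable (coordsOf M D ∪ C) L S' ∧
      ∀ v : Fin j × Fin m → M, (∀ q : Fin j, (fun i => v (q, i)) ∈ D) → (v ∈ S ↔ v ∈ S')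

/-- `D` is a sort of the stable part `St_B` : a `B`-definable, stable and stably embedded set. -/
def stSort (B : Set M) {m : ℕ} (D : Set (Fin m → M)) : Prop :=
  Set.Definable B L D ∧ StableSetT L M D ∧ StablyEmbeddedT L M B D

/-- `y` is an element of a `B`-definable, stable, stably embedded subset of `M`. -/
def inStPart1 (B : Set M) (y : M) : Prop :=
  ∃ D : Set M, Set.Definable₁ B L D ∧ StableSet1 L M D ∧ StablyEmbedded1 L M B D ∧ y ∈ D

/-- The coordinates of `St_B(C)`: coordinates of tuples lying in a sort of `St_B` and belonging
to `dcl(B ∪ C)`. -/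
def stPartOf (B C : Set M) : Set M :=
  {x | ∃ (m : ℕ) (D : Set (Fin m → M)) (e : Fin m → M) (i : Fin m),
    stSort L M B D ∧ e ∈ D ∧ InDclT L M (B ∪ C) e ∧ e i = x}

/-- `X` is internal to `Lset`. -/
def InternalTo (Lset X : Set M) : Prop :=
  X = ∅ ∨ ∃ (m : ℕ) (R : Set (Fin (m+1) → M)), Set.Definable (Set.univ : Set M) L R ∧
    (∀ w : Fin m → M, (∀ i, w i ∈ Lset) → ∃! y : M, Fin.snoc w y ∈ R) ∧
    (∀ (w : Fin m → M) (y : M), (∀ i, w i ∈ Lset) → Fin.snoc w y ∈ R → y ∈ X) ∧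
    (∀ x ∈ X, ∃ w : Fin m → M, (∀ i, w i ∈ Lset) ∧ Fin.snoc w x ∈ R)

/-- `Int(Lset, A)`: the union of the `A`-definable sets internal to `Lset`. -/
def IntUnion (Lset A : Set M) : Set M :=
  {x | ∃ X : Set M, Set.Definable₁ A L X ∧ InternalTo L M Lset X ∧ x ∈ X}

/-- A pro-`B`-definable map (a family of `B`-definable partial functions). -/
structure ProStMap (B : Set M) (γ : Type) : Type 1 where
  ι : Type
  m : ι → ℕ
  graph : (i : ι) → L.Formula (↥B ⊕ (γ ⊕ Fin (m i)))

/-- The pro-definable map is defined at `a`. -/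
def ProStMapDefinedAt {B : Set M} {γ : Type} (f : ProStMap L M B γ) (a : γ → M) : Prop :=
  ∀ i, ∃! y : Fin (f.m i) → M, (f.graph i).Realize (Sum.elim Subtype.val (Sum.elim a y))

/-- The values of the pro-definable map at `a` lie in sorts of `St_B`. -/
def ProStMapIntoSt {B : Set M} {γ : Type} (f : ProStMap L M B γ) (a : γ → M) : Prop :=
  ∀ (i : f.ι) (y : Fin (f.m i) → M),
    (f.graph i).Realize (Sum.elim Subtype.val (Sum.elim a y)) →
    ∃ D : Set (Fin (f.m i) → M), stSort L M B D ∧ y ∈ D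

/-- The set of coordinates of the value `f(a)`. -/
def ProStMapImage {B : Set M} {γ : Type} (f : ProStMap L M B γ) (a : γ → M) : Set M :=
  {x | ∃ (i : f.ι) (y : Fin (f.m i) → M) (j : Fin (f.m i)),
    (f.graph i).Realize (Sum.elim Subtype.val (Sum.elim a y)) ∧ y j = x}

/-- The type `tp(a/B)` is stably dominated : there is a pro-`B`-definable map `f` into `St_B`
such that for every tuple `d`, if `St_B(d) ⫝_B f(a)` then `tp(d/B f(a)) ⊢ tp(d/B a)`. -/
def StablyDominatedTp {γ : Type} (B : Set M) (a : γ → M) : Prop :=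
  ∃ f : ProStMap L M B γ,
    (∀ a' : γ → M, EqTp L M B a a' →
      ProStMapDefinedAt L M f a' ∧ ProStMapIntoSt L M f a') ∧
    ∀ a' : γ → M, EqTp L M B a a' →
      ∀ (δ : Type) (d : δ → M),
        SetForkIndep L M (stPartOf L M B (Set.range d)) (ProStMapImage L M f a') B →
        ∀ d' : δ → M,
          EqTp L M (B ∪ ProStMapImage L M f a') d d' →
          EqTp L M (B ∪ Set.range a') d d'

/-- The global type `p` is stably dominated over `B` : `p ↾ B` is stably dominated. -/
def StablyDominatedOver {γ : Type} (p : Set (L.Formula (M ⊕ γ))) (B : Set M) : Prop :=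
  ∀ a : γ → M, RealizesRes L M p B a → StablyDominatedTp L M B a

/-- Existential quantification over a `Unit` variable of a formula. -/
def exUnit {α : Type} (φ : L.Formula (α ⊕ Unit)) : L.Formula α :=
  BoundedFormula.ex (BoundedFormula.relabel (Sum.map id fun _ => (0 : Fin 1)) φ)

/-- Conjunction of formulas. -/
def fconj {α : Type} (φ ψ : L.Formula α) : L.Formula α :=
  BoundedFormula.not (BoundedFormula.imp φ (BoundedFormula.not ψ))

/-- The formula `∃ y (F(x,y) ∧ ψ(y))` expressing that the pushforward of the graph `F`
satisfies `ψ`. -/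
def pushFormula {γ P Q : Type} (embP : P → M) (embQ : Q → M)
    (F : L.Formula (P ⊕ (γ ⊕ Unit))) (ψ : L.Formula (Q ⊕ Unit)) : L.Formula (M ⊕ γ) :=
  exUnit L (fconj L
    (F.relabel (Sum.elim (fun x => (Sum.inl (Sum.inl (embP x)) : (M ⊕ γ) ⊕ Unit))
      (Sum.elim (fun g => Sum.inl (Sum.inr g)) Sum.inr)))
    (ψ.relabel (Sum.elim (fun x => (Sum.inl (Sum.inl (embQ x)) : (M ⊕ γ) ⊕ Unit)) Sum.inr)))

/-- `c` is the value at `a` of the definable function with graph `F`. -/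
def FunVal {γ P : Type} (embP : P → M) (F : L.Formula (P ⊕ (γ ⊕ Unit)))
    (a : γ → M) (c : M) : Prop :=
  F.Realize (Sum.elim embP (Sum.elim a fun _ => c))

/-- `c` realizes the restriction to `C` of the pushforward `F_*(p)`. -/
def PushRes {γ P : Type} (p : Set (L.Formula (M ⊕ γ))) (embP : P → M)
    (F : L.Formula (P ⊕ (γ ⊕ Unit))) (C : Set M) (c : M) : Prop :=
  ∀ ψ : L.Formula (↥C ⊕ Unit),
    pushFormula L M embP Subtype.val F ψ ∈ p →
    ψ.Realize (Sum.elim Subtype.val fun _ : Unit => c)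

/-- `p` is dominated over `B` by the definable function with graph `F` : for any `a ⊨ p↾A` and
any tuple `d`, if `f(a) ⊨ f_*(p)↾Bd` then `a ⊨ p↾Bd`. -/
def DominatedBy {γ P : Type} (p : Set (L.Formula (M ⊕ γ))) (A B : Set M)
    (embP : P → M) (F : L.Formula (P ⊕ (γ ⊕ Unit))) : Prop :=
  ∀ a : γ → M, RealizesRes L M p A a →
    ∀ (δ : Type) (d : δ → M) (c : M),
      FunVal L M embP F a c →
      PushRes L M p embP F (B ∪ Set.range d) c →
      RealizesRes L M p (B ∪ Set.range d) a

/-- The theory is NIP. -/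
def IsNIP : Prop :=
  ¬ ∃ (n m : ℕ) (φ : L.Formula (M ⊕ (Fin n ⊕ Fin m)))
      (a : ℕ → Fin n → M) (b : Set ℕ → Fin m → M),
      ∀ (i : ℕ) (S : Set ℕ),
        (φ.Realize (Sum.elim id (Sum.elim (a i) (b S))) ↔ i ∈ S)

/-- The theory eliminates imaginaries: every `M`-definable set has a code. -/
def ElimImaginaries : Prop :=
  ∀ (n : ℕ) (S : Set (Fin n → M)), Set.Definable (Set.univ : Set M) L S →
    ∃ (k : ℕ) (c : Fin k → M), ∀ σ : M ≃[L] M,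
      ((∀ v : Fin n → M, v ∈ S ↔ (fun i => σ (v i)) ∈ S) ↔ ∀ j, σ (c j) = c j)

/-- The theory has the bounded stabilizing property. -/
def TheoryHasBS (κ : Cardinal) : Prop :=
  ∀ (A : Set M), #A < κ → ∀ (n : ℕ) (a : Fin n → M),
    ¬ ∃ (ι : Type) (r : ι → ι → Prop), IsWellOrder ι r ∧
        #ι = Order.succ (theoryCard L) ∧
        ∃ X : ι → Set M, (∀ i j, r i j → X i ⊂ X j) ∧
          ∀ i, dcl L M A ⊆ X i ∧ X i ⊆ dcl L M (A ∪ Set.range a) ∧ dcl L M (X i) = X i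

/-- The theory has the algebraic stabilizing property. -/
def TheoryHasABS (κ : Cardinal) : Prop :=
  ∀ (A : Set M), #A < κ → ∀ (n : ℕ) (a : Fin n → M),
    ¬ ∃ (ι : Type) (r : ι → ι → Prop), IsWellOrder ι r ∧
        #ι = Order.succ (theoryCard L) ∧
        ∃ X : ι → Set M, (∀ i j, r i j → X i ⊂ X j) ∧
          ∀ i, acl L M A ⊆ X i ∧ X i ⊆ acl L M (A ∪ Set.range a) ∧ acl L M (X i) = X i

/-- The `C`-definable set `Lset` has the bounded stabilizing property. -/
def SetHasBS (κ : Cardinal) (C Lset : Set M) : Prop :=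
  ∀ (A : Set M), C ⊆ A → #A < κ → ∀ (n : ℕ) (a : Fin n → M),
    ¬ ∃ (ι : Type) (r : ι → ι → Prop), IsWellOrder ι r ∧
        #ι = Order.succ (theoryCard L) ∧
        ∃ X : ι → Set M, (∀ i j, r i j → X i ⊂ X j) ∧
          ∀ i, (Lset ∩ dcl L M A ⊆ X i) ∧ (X i ⊆ Lset ∩ dcl L M (A ∪ Set.range a)) ∧
            (Lset ∩ dcl L M (A ∪ X i) = X i)

/-- The `C`-definable set `Lset` has the algebraic stabilizing property. -/
def SetHasABS (κ : Cardinal) (C Lset : Set M) : Prop :=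
  ∀ (A : Set M), C ⊆ A → #A < κ → ∀ (n : ℕ) (a : Fin n → M),
    ¬ ∃ (ι : Type) (r : ι → ι → Prop), IsWellOrder ι r ∧
        #ι = Order.succ (theoryCard L) ∧
        ∃ X : ι → Set M, (∀ i j, r i j → X i ⊂ X j) ∧
          ∀ i, (Lset ∩ acl L M A ⊆ X i) ∧ (X i ⊆ Lset ∩ acl L M (A ∪ Set.range a)) ∧
            (Lset ∩ acl L M (A ∪ X i) = X i)

/-- `φ(x,b)` strongly divides over `A`. -/
def StronglyDividesOver {γ β : Type} (φ : L.Formula (γ ⊕ β)) (b : β → M) (A : Set M) : Prop :=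
  (∃ i, b i ∉ acl L M A) ∧
  ∃ k : ℕ, 0 < k ∧
    ∀ bs : Fin k → β → M, (∀ i, EqTp L M A (bs i) b) →
      (∀ i j, i ≠ j → bs i ≠ bs j) →
      ¬ ∃ x : γ → M, ∀ i, φ.Realize (Sum.elim x (bs i))

/-- `φ(x,b)` þ-divides over `A`. -/
def ThornDividesOver {γ β : Type} (φ : L.Formula (γ ⊕ β)) (b : β → M) (A : Set M) : Prop :=
  ∃ (l : ℕ) (c : Fin l → M), StronglyDividesOver L M φ b (A ∪ Set.range c)

/-- `tp(a/B)` þ-forks over `A`. -/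
def TpThornForksOver {γ : Type} (a : γ → M) (B A : Set M) : Prop :=
  ∃ (n : ℕ) (φ : L.Formula (γ ⊕ Fin n)) (b : Fin n → M),
    (∀ i, b i ∈ B) ∧ φ.Realize (Sum.elim a b) ∧
    ∃ (m : ℕ) (k : Fin m → ℕ) (ψ : (j : Fin m) → L.Formula (γ ⊕ Fin (k j)))
      (c : (j : Fin m) → Fin (k j) → M),
      (∀ j, ThornDividesOver L M (ψ j) (c j) A) ∧
      ∀ x : γ → M, φ.Realize (Sum.elim x b) → ∃ j, (ψ j).Realize (Sum.elim x (c j))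

/-- The theory is rosy: þ-forking independence is a strict independence relation,
in particular it satisfies symmetry and local character. -/
def IsRosy : Prop :=
  (∀ (A : Set M) (na nb : ℕ) (a : Fin na → M) (b : Fin nb → M),
    (¬ TpThornForksOver L M a (A ∪ Set.range b) A) ↔
      (¬ TpThornForksOver L M b (A ∪ Set.range a) A)) ∧
  (∀ (n : ℕ) (a : Fin n → M) (B : Set M),
    ∃ A₀ : Set M, A₀ ⊆ B ∧ #A₀ ≤ theoryCard L ∧ ¬ TpThornForksOver L M a B A₀)

/-- The global type `p` is definable over `A`. -/
def DefinableTypeOver {γ : Type} (p : Set (L.Formula (M ⊕ γ))) (A : Set M) : Prop :=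
  ∀ (n : ℕ) (φ : L.Formula (Fin n ⊕ γ)),
    Set.Definable A L
      {b : Fin n → M | φ.relabel (Sum.elim (fun i => (Sum.inl (b i) : M ⊕ γ)) Sum.inr) ∈ p}

/-- The value of the `A`-definable family of functions with graph `G` at parameter `b` and
argument `a`. -/
def FamVal {γ : Type} {mb : ℕ} {A : Set M} (G : L.Formula (↥A ⊕ (Fin mb ⊕ (γ ⊕ Unit))))
    (b : Fin mb → M) (a : γ → M) (y : M) : Prop :=
  G.Realize (Sum.elim Subtype.val (Sum.elim b (Sum.elim a fun _ => y)))

/-- `f_{b₁}` and `f_{b₂}` have the same germ on `p`. -/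
def GermEq {γ : Type} {mb : ℕ} {A : Set M} (p : Set (L.Formula (M ⊕ γ)))
    (G : L.Formula (↥A ⊕ (Fin mb ⊕ (γ ⊕ Unit)))) (b₁ b₂ : Fin mb → M) : Prop :=
  ∀ a : γ → M, RealizesRes L M p (A ∪ Set.range b₁ ∪ Set.range b₂) a →
    ∀ y : M, (FamVal L M G b₁ a y ↔ FamVal L M G b₂ a y)

/-- The subtuple of a sequence of tuples indexed by a finite set of indices. -/
def subTup {K γ : Type} (M : Type) (b : K → γ → M) (J : Finset K) :
    {j // j ∈ J} × γ → M := fun q => b q.1.1 q.2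

/-- The row `𝐝_k` of a `ℤ × ℤ`-indexed sequence. -/
def rowTup {m : ℕ} (M : Type) (c : ℤ × ℤ → Fin m → M) (k : ℤ) : ℤ × Fin m → M :=
  fun q => c (k, q.1) q.2

/-- The tuple of rows `𝐝_I` of a `ℤ × ℤ`-indexed sequence. -/
def rowsTup {m : ℕ} (M : Type) (c : ℤ × ℤ → Fin m → M) (I : Finset ℤ) :
    {i // i ∈ I} × ℤ × Fin m → M :=
  fun q => c (q.1.1, q.2.1) q.2.2

section Aux

open FirstOrder FirstOrder.Language Cardinal

variable {L : FirstOrder.Language.{0,0}} {M : Type} [L.Structure M] {γ : Type}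

lemma realize_relabel_left {α : Type} (f : α → M) (ψ : L.Formula (α ⊕ γ)) (v : γ → M) :
    (ψ.relabel (Sum.map f id)).Realize (Sum.elim id v) ↔ ψ.Realize (Sum.elim f v) := by
  rw [Formula.realize_relabel]
  have : (Sum.elim id v : M ⊕ γ → M) ∘ (Sum.map f id) = Sum.elim f v := by
    funext x; cases x <;> simp
  rw [this]

lemma realize_fconj {α : Type} (φ ψ : L.Formula α) (v : α → M) :
    (Paper.fconj L φ ψ).Realize v ↔ φ.Realize v ∧ ψ.Realize v := by
  simp only [Paper.fconj, Formula.Realize, BoundedFormula.realize_not,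
    BoundedFormula.realize_imp]
  tauto

/-- A "true" formula. -/
def ftop (L : FirstOrder.Language.{0,0}) (α : Type) : L.Formula α :=
  BoundedFormula.not (BoundedFormula.falsum)

lemma realize_ftop {α : Type} (v : α → M) : (ftop L α).Realize v := by
  exact fun h => h

lemma realize_exUnit {α : Type} (φ : L.Formula (α ⊕ Unit)) (v : α → M) :
    (Paper.exUnit L φ).Realize v ↔ ∃ y : M, φ.Realize (Sum.elim v (fun _ => y)) := by
  simp only [Paper.exUnit, Formula.Realize, BoundedFormula.realize_ex,
    BoundedFormula.realize_relabel]
  constructor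
  · rintro ⟨y, hy⟩
    refine ⟨y, ?_⟩
    convert hy using 2
    funext x
    cases x with
    | inl a => simp
    | inr u => simp [Fin.snoc]
  · rintro ⟨y, hy⟩
    refine ⟨y, ?_⟩
    convert hy using 2
    funext x
    cases x with
    | inl a => simp
    | inr u => simp [Fin.snoc]

variable [DecidableEq γ]

/-- Existentially quantify the variable `c` of a formula. -/
def exAt (c : γ) {α : Type} (φ : L.Formula (α ⊕ γ)) : L.Formula (α ⊕ γ) :=
  Paper.exUnit L (φ.relabel (fun x => match x with
    | .inl a => .inl (.inl a)
    | .inr g => if g = c then .inr () else .inl (.inr g)))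

lemma realize_exAt (c : γ) {α : Type} (φ : L.Formula (α ⊕ γ)) (u : α → M) (w : γ → M) :
    (exAt c φ).Realize (Sum.elim u w) ↔
      ∃ y : M, φ.Realize (Sum.elim u (Function.update w c y)) := by
  rw [exAt, realize_exUnit]
  apply exists_congr; intro y
  rw [Formula.realize_relabel]
  have : (Sum.elim (Sum.elim u w) (fun _ => y) : (α ⊕ γ) ⊕ Unit → M) ∘
      (fun x : α ⊕ γ => match x with
        | .inl a => Sum.inl (Sum.inl a)
        | .inr g => if g = c then Sum.inr () else Sum.inl (Sum.inr g)) =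
      Sum.elim u (Function.update w c y) := by
    funext x
    cases x with
    | inl a => simp
    | inr g =>
      by_cases hg : g = c
      · subst hg; simp
      · simp [hg, Function.update_of_ne hg]
  rw [this]

end Aux
section Aux2

open FirstOrder FirstOrder.Language Cardinal Set

variable {L : FirstOrder.Language.{0,0}} {M : Type} [L.Structure M] {γ : Type}
variable {p : Set (L.Formula (M ⊕ γ))}

lemma p_mem_of_imp (hglob : Paper.IsGlobalType L M p) {φ χ : L.Formula (M ⊕ γ)} (hφ : φ ∈ p)
    (h : ∀ w : γ → M, φ.Realize (Sum.elim id w) → χ.Realize (Sum.elim id w)) : χ ∈ p := by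
  classical
  rcases hglob.2 χ with hc | hc
  · exact hc
  · exfalso
    obtain ⟨w, hw⟩ := hglob.1 {φ, BoundedFormula.not χ} (by
      intro x hx
      simp only [Finset.coe_insert, Finset.coe_singleton, Set.mem_insert_iff,
        Set.mem_singleton_iff] at hx
      rcases hx with rfl | rfl
      · exact hφ
      · exact hc)
    have h1 := hw φ (by simp)
    have h2 := hw (BoundedFormula.not χ) (by simp)
    rw [show (BoundedFormula.not χ) = Formula.not χ from rfl, Formula.realize_not] at h2
    exact h2 (h w h1)

lemma p_mem_of_valid (hglob : Paper.IsGlobalType L M p) {χ : L.Formula (M ⊕ γ)}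
    (h : ∀ w : γ → M, χ.Realize (Sum.elim id w)) : χ ∈ p := by
  rcases hglob.2 χ with hc | hc
  · exact hc
  · exfalso
    obtain ⟨w, hw⟩ := hglob.1 {BoundedFormula.not χ} (by simpa using hc)
    have h2 := hw (BoundedFormula.not χ) (by simp)
    rw [show (BoundedFormula.not χ) = Formula.not χ from rfl, Formula.realize_not] at h2
    exact h2 (h w)

lemma p_mem_of_imp₂ (hglob : Paper.IsGlobalType L M p) {φ₁ φ₂ χ : L.Formula (M ⊕ γ)}
    (h1 : φ₁ ∈ p) (h2 : φ₂ ∈ p)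
    (h : ∀ w : γ → M, φ₁.Realize (Sum.elim id w) → φ₂.Realize (Sum.elim id w) →
      χ.Realize (Sum.elim id w)) : χ ∈ p := by
  classical
  rcases hglob.2 χ with hc | hc
  · exact hc
  · exfalso
    obtain ⟨w, hw⟩ := hglob.1 {φ₁, φ₂, BoundedFormula.not χ} (by
      intro x hx
      simp only [Finset.coe_insert, Finset.coe_singleton, Set.mem_insert_iff,
        Set.mem_singleton_iff] at hx
      rcases hx with rfl | rfl | rfl
      · exact h1
      · exact h2
      · exact hc)
    have ha := hw φ₁ (by simp)
    have hb := hw φ₂ (by simp)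
    have hn := hw (BoundedFormula.not χ) (by simp)
    rw [show (BoundedFormula.not χ) = Formula.not χ from rfl, Formula.realize_not] at hn
    exact hn (h w ha hb)

/-- `φ`'s realization depends only on the variables in `s`. -/
def DepOn (φ : L.Formula (M ⊕ γ)) (s : Set γ) : Prop :=
  ∀ w w' : γ → M, (∀ j ∈ s, w j = w' j) →
    (φ.Realize (Sum.elim id w) ↔ φ.Realize (Sum.elim id w'))

lemma depOn_mono {φ : L.Formula (M ⊕ γ)} {s s' : Set γ} (hss : s ⊆ s') (h : DepOn φ s) :
    DepOn φ s' := fun w w' hag => h w w' (fun j hj => hag j (hss hj))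

lemma depOn_inter {φ : L.Formula (M ⊕ γ)} {s₁ s₂ : Set γ} (h1 : DepOn φ s₁)
    (h2 : DepOn φ s₂) : DepOn φ (s₁ ∩ s₂) := by
  classical
  intro w w' hag
  set w'' : γ → M := fun j => if j ∈ s₁ then w j else w' j with hw''
  have a1 : φ.Realize (Sum.elim id w) ↔ φ.Realize (Sum.elim id w'') :=
    h1 w w'' (fun j hj => by simp [hw'', hj])
  have a2 : φ.Realize (Sum.elim id w'') ↔ φ.Realize (Sum.elim id w') := by
    refine h2 w'' w' (fun j hj => ?_)
    by_cases hj1 : j ∈ s₁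
    · simp only [hw'', if_pos hj1]
      exact hag j ⟨hj1, hj⟩
    · simp [hw'', hj1]
  exact a1.trans a2

lemma exists_depOn_finset (φ : L.Formula (M ⊕ γ)) : ∃ t : Finset γ, DepOn φ ↑t := by
  classical
  set fv := φ.freeVarFinset with hfv
  refine ⟨fv.biUnion (fun x => Sum.elim (fun _ => ∅) (fun g => {g}) x), ?_⟩
  intro w w' hag
  have key : ∀ u : γ → M, φ.Realize (Sum.elim id u) ↔
      (φ.restrictFreeVar (Set.inclusion (subset_refl (↑fv : Set (M ⊕ γ))))).Realize
        ((Sum.elim id u) ∘ (fun x : (↑(↑fv : Set (M ⊕ γ)) : Type) => (x : M ⊕ γ)))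
        (default : Fin 0 → M) := by
    intro u
    rw [show φ.Realize (Sum.elim id u) = BoundedFormula.Realize φ (Sum.elim id u) default from rfl]
    exact (BoundedFormula.realize_restrictFreeVar' (subset_refl _)).symm
  rw [key w, key w']
  have : ((Sum.elim id w) ∘ (fun x : (↑(↑fv : Set (M ⊕ γ)) : Type) => (x : M ⊕ γ))) =
      ((Sum.elim id w') ∘ (fun x : (↑(↑fv : Set (M ⊕ γ)) : Type) => (x : M ⊕ γ))) := by
    funext x
    obtain ⟨x, hx⟩ := x
    cases x with
    | inl m => rfl
    | inr g =>
      simp only [Function.comp_apply, Sum.elim_inr]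
      refine hag g ?_
      simp only [Finset.coe_biUnion, Set.mem_iUnion]
      exact ⟨Sum.inr g, hx, by simp⟩
  rw [this]

lemma realizesRes_mono (hglob : Paper.IsGlobalType L M p) {B' B : Set M} (hsub : B' ⊆ B)
    {v : γ → M} (h : Paper.RealizesRes L M p B v) : Paper.RealizesRes L M p B' v := by
  rintro φ hφp ⟨ψ', rfl⟩
  set ψ : L.Formula (↥B ⊕ γ) := ψ'.relabel (Sum.map (Set.inclusion hsub) id) with hψ
  have hequiv : ∀ w : γ → M, (ψ.relabel (Sum.map Subtype.val id)).Realize (Sum.elim id w) ↔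
      (ψ'.relabel (Sum.map Subtype.val id)).Realize (Sum.elim id w) := by
    intro w
    rw [realize_relabel_left, realize_relabel_left, hψ, Formula.realize_relabel]
    have : ((Sum.elim Subtype.val w : ↥B ⊕ γ → M) ∘ (Sum.map (Set.inclusion hsub) id)) =
        (Sum.elim Subtype.val w : ↥B' ⊕ γ → M) := by
      funext x; cases x <;> simp [Set.inclusion]
    rw [this]
  have hφ₂p : (ψ.relabel (Sum.map Subtype.val id)) ∈ p :=
    p_mem_of_imp hglob hφp (fun w hw => (hequiv w).2 hw)
  exact (hequiv _).1 (h _ hφ₂p ⟨ψ, rfl⟩)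

end Aux2
section Aux3

open FirstOrder FirstOrder.Language Cardinal Set

variable {L : FirstOrder.Language.{0,0}} {M : Type} [L.Structure M] {γ : Type}
variable {p : Set (L.Formula (M ⊕ γ))}

lemma foldr_fconj_realize {α : Type} (l : List (L.Formula α)) (u : α → M) :
    (l.foldr (Paper.fconj L) (ftop L α)).Realize u ↔ ∀ ψ ∈ l, ψ.Realize u := by
  induction l with
  | nil => simp [realize_ftop]
  | cons a l ih => simp [List.foldr_cons, realize_fconj, ih]

lemma foldr_fconj_mem (hglob : Paper.IsGlobalType L M p) {B : Set M}
    (l : List (L.Formula (↥B ⊕ γ)))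
    (h : ∀ ψ ∈ l, ψ.relabel (Sum.map Subtype.val id) ∈ p) :
    (l.foldr (Paper.fconj L) (ftop L (↥B ⊕ γ))).relabel (Sum.map Subtype.val id) ∈ p := by
  induction l with
  | nil =>
    apply p_mem_of_valid hglob
    intro w
    rw [realize_relabel_left]
    exact realize_ftop _
  | cons a l ih =>
    have ha := h a List.mem_cons_self
    have hl := ih (fun ψ hψ => h ψ (List.mem_cons_of_mem _ hψ))
    apply p_mem_of_imp₂ hglob ha hl
    intro w hwa hwl
    rw [realize_relabel_left] at hwa hwl ⊢
    rw [List.foldr_cons, realize_fconj]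
    exact ⟨hwa, hwl⟩

lemma realizesRes_exists (κ : Cardinal) (hM : Paper.IsMonster L M κ)
    (hT : Paper.theoryCard L < κ) (hγ : #γ < κ)
    (hglob : Paper.IsGlobalType L M p)
    (B : Set M) (hB : #B < κ) :
    ∃ v : γ → M, Paper.RealizesRes L M p B v := by
  classical
  obtain ⟨v0, -⟩ := hglob.1 ∅ (by simp)
  have haleph : ℵ₀ < κ := lt_of_le_of_lt (le_add_self) hT
  set r : γ → γ → Prop := WellOrderingRel with hr
  have hwo : IsWellOrder γ r := WellOrderingRel.isWellOrder
  have wf : WellFounded r := hwo.wf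
  set F : (c : γ) → ((j : γ) → r j c → M) → M := fun c prior =>
    @Classical.epsilon M ⟨v0 c⟩ (fun y =>
      ∀ φ' ∈ p, Paper.FormulaOver L M B φ' → ∀ t' : Finset γ, DepOn φ' ↑t' →
        (↑t' ⊆ {j | r j c ∨ j = c}) →
        φ'.Realize (Sum.elim id
          (fun g => if hg : r g c then prior g hg else if g = c then y else v0 g))) with hF
  set v : γ → M := wf.fix F with hv
  have hfix : ∀ c, v c = F c (fun j _ => v j) := fun c => wf.fix_eq F c
  -- the key induction
  set Qmot : γ → Prop := fun c =>
    ∀ φ' ∈ p, Paper.FormulaOver L M B φ' → ∀ t' : Finset γ, DepOn φ' ↑t' →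
      (↑t' ⊆ {j | r j c ∨ j = c}) → φ'.Realize (Sum.elim id v) with hQmot
  -- helper for strictly smaller variable sets
  have hLT : ∀ c : γ, (∀ j, r j c → Qmot j) →
      ∀ φ' ∈ p, Paper.FormulaOver L M B φ' → ∀ t' : Finset γ, DepOn φ' ↑t' →
      (↑t' ⊆ {j | r j c}) → φ'.Realize (Sum.elim id v) := by
    intro c IH φ' hφ' hov t' dep hsub
    rcases t'.eq_empty_or_nonempty with rfl | hne
    · obtain ⟨w, hw⟩ := hglob.1 {φ'} (by simpa using hφ')
      exact (dep w v (by simp)).1 (hw φ' (by simp))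
    · letI lo : LinearOrder γ := hwo.linearOrder r
      set j0 := t'.max' hne with hj0
      have hj0c : r j0 c := hsub (t'.max'_mem hne)
      refine IH j0 hj0c φ' hφ' hov t' dep ?_
      intro j hj
      have hle : j ≤ j0 := t'.le_max' j hj
      rcases lt_or_eq_of_le hle with hlt | heq
      · exact Or.inl hlt
      · exact Or.inr heq
  have Key : ∀ c, Qmot c := by
    intro c
    refine wf.induction c ?_
    intro c IH φ' hφ' hov t' dep hsub
    by_cases hc : c ∈ t'
    · -- use the epsilon choice at c
      -- first, existence of a good y, via saturation
      have hEX : ∃ y : M,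
          ∀ φ'' ∈ p, Paper.FormulaOver L M B φ'' → ∀ t'' : Finset γ, DepOn φ'' ↑t'' →
            (↑t'' ⊆ {j | r j c ∨ j = c}) →
            φ''.Realize (Sum.elim id
              (fun g => if hg : r g c then v g else if g = c then y else v0 g)) := by
        set B' : Set M := B ∪ Set.range v0 ∪ Set.range v with hB'def
        have hB' : #B' < κ := by
          refine lt_of_le_of_lt (le_trans (mk_union_le _ _)
            (add_le_add (mk_union_le _ _) le_rfl)) ?_
          have h1 : #B + #(Set.range v0) + #(Set.range v) < κ := by
            refine Cardinal.add_lt_of_lt (le_of_lt haleph) (Cardinal.add_lt_of_lt (le_of_lt haleph) hB ?_) ?_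
            · exact lt_of_le_of_lt mk_range_le hγ
            · exact lt_of_le_of_lt mk_range_le hγ
          exact h1
        set sub : L.Formula (↥B ⊕ γ) → L.Formula (↥B' ⊕ Fin 1) := fun ψ =>
          ψ.relabel (Sum.elim (fun s => Sum.inl ⟨s.1, Or.inl (Or.inl s.2)⟩)
            (fun g => if g = c then Sum.inr 0 else Sum.inl ⟨v g, Or.inr ⟨g, rfl⟩⟩)) with hsubdef
        have hsubreal : ∀ (ψ : L.Formula (↥B ⊕ γ)) (y : M),
            (sub ψ).Realize (Sum.elim Subtype.val (fun _ : Fin 1 => y)) ↔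
              ψ.Realize (Sum.elim Subtype.val (Function.update v c y)) := by
          intro ψ y
          rw [hsubdef]
          simp only []
          rw [Formula.realize_relabel]
          have : ((Sum.elim Subtype.val (fun _ : Fin 1 => y) : ↥B' ⊕ Fin 1 → M) ∘
              (Sum.elim (fun s : ↥B => Sum.inl ⟨s.1, Or.inl (Or.inl s.2)⟩)
                (fun g => if g = c then Sum.inr 0 else Sum.inl ⟨v g, Or.inr ⟨g, rfl⟩⟩))) =
              (Sum.elim Subtype.val (Function.update v c y) : ↥B ⊕ γ → M) := by
            funext x
            cases x with
            | inl s => simp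
            | inr g =>
              by_cases hg : g = c
              · subst hg; simp
              · simp [hg, Function.update_of_ne hg]
          rw [this]
        set Q : Set (L.Formula (↥B' ⊕ Fin 1)) := {χ | ∃ (ψ : L.Formula (↥B ⊕ γ))
          (t'' : Finset γ), (ψ.relabel (Sum.map Subtype.val id)) ∈ p ∧
          DepOn (ψ.relabel (Sum.map Subtype.val id)) ↑t'' ∧
          (↑t'' ⊆ {j | r j c ∨ j = c}) ∧ χ = sub ψ} with hQdef
        have hfinsat : ∀ s : Finset (L.Formula (↥B' ⊕ Fin 1)), ↑s ⊆ Q →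
            ∃ vv : Fin 1 → M, ∀ χ ∈ s, χ.Realize (Sum.elim Subtype.val vv) := by
          intro s hs
          have hdata : ∀ χ ∈ s, ∃ (ψ : L.Formula (↥B ⊕ γ)) (t'' : Finset γ),
              (ψ.relabel (Sum.map Subtype.val id)) ∈ p ∧
              DepOn (ψ.relabel (Sum.map Subtype.val id)) ↑t'' ∧
              (↑t'' ⊆ {j | r j c ∨ j = c}) ∧ χ = sub ψ := fun χ hχ => hs hχ
          choose fψ ft h1 h2 h3 h4 using hdata
          set lst : List (L.Formula (↥B ⊕ γ)) :=
            s.attach.toList.map (fun x => fψ x.1 x.2) with hlst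
          set ΨB : L.Formula (↥B ⊕ γ) := lst.foldr (Paper.fconj L) (ftop L _) with hΨB
          set Ψp : L.Formula (M ⊕ γ) := ΨB.relabel (Sum.map Subtype.val id) with hΨp
          have hΨmem : Ψp ∈ p := by
            refine foldr_fconj_mem hglob lst ?_
            intro ψ hψ
            rw [hlst] at hψ
            obtain ⟨x, hx, rfl⟩ := List.mem_map.1 hψ
            exact h1 x.1 x.2
          have hΨreal : ∀ w : γ → M, Ψp.Realize (Sum.elim id w) ↔
              ∀ x : {x // x ∈ s}, ((fψ x.1 x.2).relabel (Sum.map Subtype.val id)).Realize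
                (Sum.elim id w) := by
            intro w
            rw [hΨp, realize_relabel_left, hΨB, foldr_fconj_realize]
            constructor
            · intro h x
              rw [realize_relabel_left]
              refine h _ ?_
              rw [hlst]
              exact List.mem_map.2 ⟨x, by simp, rfl⟩
            · intro h ψ hψ
              rw [hlst] at hψ
              obtain ⟨x, hx, rfl⟩ := List.mem_map.1 hψ
              have := h x
              rwa [realize_relabel_left] at this
          set χB : L.Formula (↥B ⊕ γ) := exAt c ΨB with hχB
          set χp : L.Formula (M ⊕ γ) := χB.relabel (Sum.map Subtype.val id) with hχp
          have hχreal : ∀ w : γ → M, χp.Realize (Sum.elim id w) ↔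
              ∃ y : M, Ψp.Realize (Sum.elim id (Function.update w c y)) := by
            intro w
            rw [hχp, realize_relabel_left, hχB, realize_exAt]
            apply exists_congr; intro y
            rw [hΨp, realize_relabel_left]
          have hχmem : χp ∈ p := by
            refine p_mem_of_imp hglob hΨmem ?_
            intro w hw
            rw [hχreal]
            exact ⟨w c, by rwa [Function.update_eq_self]⟩
          set Tset : Set γ := {j | (∃ x : {x // x ∈ s}, j ∈ ft x.1 x.2) ∧ j ≠ c} with hTset
          have hχdep : DepOn χp Tset := by
            intro w w' hag
            rw [hχreal w, hχreal w']
            apply exists_congr; intro y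
            rw [hΨreal, hΨreal]
            apply forall_congr'; intro x
            refine h2 x.1 x.2 _ _ ?_
            intro j hj
            by_cases hjc : j = c
            · subst hjc; simp
            · have hjT : j ∈ Tset := ⟨⟨x, hj⟩, hjc⟩
              rw [Function.update_of_ne hjc, Function.update_of_ne hjc]
              exact hag j hjT
          obtain ⟨tbr, htbr⟩ := exists_depOn_finset χp
          set tfin : Finset γ := tbr.filter (· ∈ Tset) with htfin
          have htfincoe : (↑tfin : Set γ) = ↑tbr ∩ Tset := by
            rw [htfin]; ext j; simp [Finset.mem_filter]
          have hχdepfin : DepOn χp ↑tfin := by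
            rw [htfincoe]; exact depOn_inter htbr hχdep
          have htfinsub : (↑tfin : Set γ) ⊆ {j | r j c} := by
            intro j hj
            rw [htfincoe] at hj
            obtain ⟨-, ⟨x, hx⟩, hjc⟩ := hj
            rcases h3 x.1 x.2 hx with h | h
            · exact h
            · exact absurd h hjc
          have hχv : χp.Realize (Sum.elim id v) :=
            hLT c IH χp hχmem ⟨χB, rfl⟩ tfin hχdepfin htfinsub
          rw [hχreal] at hχv
          obtain ⟨y, hy⟩ := hχv
          refine ⟨fun _ => y, ?_⟩
          intro χ hχ
          rw [h4 χ hχ, hsubreal]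
          have := (hΨreal _).1 hy ⟨χ, hχ⟩
          rwa [realize_relabel_left] at this
        obtain ⟨vv, hvv⟩ := hM.saturated B' hB' 1 Q hfinsat
        set y := vv 0 with hy
        have hvv' : vv = fun _ => y := funext fun i => by rw [Subsingleton.elim i 0]
        refine ⟨y, ?_⟩
        intro φ'' hφ'' hov'' t'' dep'' hsub''
        obtain ⟨ψ'', rfl⟩ := hov''
        have hQmem : sub ψ'' ∈ Q := ⟨ψ'', t'', hφ'', dep'', hsub'', rfl⟩
        have hreal := hvv _ hQmem
        rw [hvv', hsubreal] at hreal
        have hreal' : (ψ''.relabel (Sum.map Subtype.val id)).Realize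
            (Sum.elim id (Function.update v c y)) := by
          rwa [realize_relabel_left]
        refine (dep'' _ _ ?_).1 hreal'
        intro j hj
        rcases hsub'' hj with hjc | hjc
        · have hjne : j ≠ c := fun h => (Std.Irrefl.irrefl (r := r) c) (h ▸ hjc)
          rw [Function.update_of_ne hjne]
          simp [hjc]
        · subst hjc
          have : ¬ r j j := Std.Irrefl.irrefl j
          simp [this]
      -- epsilon spec
      have hPvc : ∀ φ'' ∈ p, Paper.FormulaOver L M B φ'' → ∀ t'' : Finset γ, DepOn φ'' ↑t'' →
          (↑t'' ⊆ {j | r j c ∨ j = c}) →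
          φ''.Realize (Sum.elim id
            (fun g => if hg : r g c then v g else if g = c then v c else v0 g)) := by
        have h := Classical.epsilon_spec hEX
        have hvc : v c = @Classical.epsilon M ⟨v0 c⟩ (fun y : M =>
            ∀ φ'' ∈ p, Paper.FormulaOver L M B φ'' → ∀ t'' : Finset γ, DepOn φ'' ↑t'' →
              (↑t'' ⊆ {j | r j c ∨ j = c}) →
              φ''.Realize (Sum.elim id
                (fun g => if hg : r g c then v g else if g = c then y else v0 g))) := by
          rw [hfix c]
        rw [hvc]
        exact h
      have hφreal := hPvc φ' hφ' hov t' dep hsub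
      refine (dep _ _ ?_).1 hφreal
      intro j hj
      rcases hsub hj with hjc | hjc
      · simp [hjc]
      · subst hjc
        have : ¬ r j j := Std.Irrefl.irrefl j
        simp [this]
    · -- c ∉ t' : strictly smaller
      refine hLT c IH φ' hφ' hov t' dep ?_
      intro j hj
      rcases hsub hj with h | h
      · exact h
      · exact absurd (h ▸ hj) hc
  -- conclude
  refine ⟨v, ?_⟩
  intro φ hφ hov
  obtain ⟨t, dep⟩ := exists_depOn_finset φ
  rcases t.eq_empty_or_nonempty with rfl | hne
  · obtain ⟨w, hw⟩ := hglob.1 {φ} (by simpa using hφ)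
    exact (dep w v (by simp)).1 (hw φ (by simp))
  · letI lo : LinearOrder γ := hwo.linearOrder r
    set j0 := t.max' hne with hj0
    refine Key j0 φ hφ hov t dep ?_
    intro j hj
    have hle : j ≤ j0 := t.le_max' j hj
    rcases lt_or_eq_of_le hle with hlt | heq
    · exact Or.inl hlt
    · exact Or.inr heq

end Aux3
section Aux4

open FirstOrder FirstOrder.Language Cardinal Set

variable {L : FirstOrder.Language.{0,0}} {M : Type} [L.Structure M]

lemma formula_card_le (α : Type) :
    #(L.Formula α) ≤ max ℵ₀ (#α + L.card) := by
  have h1 : #(L.Formula α) ≤ #(Σ n, L.BoundedFormula α n) :=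
    Cardinal.mk_le_of_injective (f := fun φ => (⟨0, φ⟩ : Σ n, L.BoundedFormula α n))
      (fun a b h => by
        have := (Sigma.mk.inj_iff.1 h).2
        exact eq_of_heq this)
  refine h1.trans ?_
  have h2 := FirstOrder.Language.BoundedFormula.card_le (L := L) (α := α)
  simpa using h2

end Aux4
theorem p_basis_exists
    (L : FirstOrder.Language.{0,0}) (M : Type) [L.Structure M] (κ : Cardinal)
    (hM : IsMonster L M κ) (hT : theoryCard L < κ)
    (A : Set M) (hA : #A < κ)
    {γ β : Type} (hγ : #γ < κ) (hβ : #β < κ)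
    (p : Set (L.Formula (M ⊕ γ))) (hglob : IsGlobalType L M p)
    (hgs : GenericallyStable L M p A)
    (b : β → M) :
    ∃ (I : Type) (r : I → I → Prop) (_ : IsWellOrder I r) (e : I → γ → M),
      MorleySeqOver L M p A r e ∧
      ∀ a : γ → M, RealizesRes L M p (A ∪ ⋃ i, Set.range (e i)) a →
        RealizesRes L M p (A ∪ Set.range b) a := by
  classical
  by_contra hgoal
  push_neg at hgoal
  obtain ⟨v0, -⟩ := hglob.1 ∅ (by simp)
  have haleph : ℵ₀ < κ := lt_of_le_of_lt le_add_self hT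
  set Fml := L.Formula (↥(A ∪ Set.range b) ⊕ γ) with hFml
  set lam : Cardinal := #Fml + ℵ₀ with hlam
  have hLcard : L.card < κ := lt_of_le_of_lt (self_le_add_right _ _) hT
  have hlamκ : lam < κ := by
    refine Cardinal.add_lt_of_lt haleph.le ?_ haleph
    refine lt_of_le_of_lt (formula_card_le _) ?_
    rw [max_lt_iff]
    refine ⟨haleph, ?_⟩
    refine Cardinal.add_lt_of_lt haleph.le ?_ hLcard
    have h1 : #(↥(A ∪ Set.range b) ⊕ γ) = #(↥(A ∪ Set.range b)) + #γ := by
      simp [Cardinal.mk_sum]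
    rw [h1]
    refine Cardinal.add_lt_of_lt haleph.le ?_ hγ
    refine lt_of_le_of_lt (Cardinal.mk_union_le _ _) ?_
    exact Cardinal.add_lt_of_lt haleph.le hA (lt_of_le_of_lt Cardinal.mk_range_le hβ)
  have hlaminf : ℵ₀ ≤ lam := le_add_self
  set O := (Order.succ lam).ord.ToType with hO
  have hOcard : #O = Order.succ lam := by
    rw [hO, Cardinal.mk_toType, Cardinal.card_ord]
  haveI hOinf : Infinite O := by
    rw [Cardinal.infinite_iff, hOcard]
    exact hlaminf.trans (Order.le_succ _)
  have hIio : ∀ c : O, #(Set.Iio c) ≤ lam := by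
    intro c
    have := Cardinal.mk_Iio_ord_toType (c := Order.succ lam) c
    exact Order.lt_succ_iff.1 this
  -- the recursive construction of bad/good pairs
  haveI hPairne : Nonempty ((γ → M) × (γ → M)) := ⟨(v0, v0)⟩
  have wfO : WellFounded ((· < ·) : O → O → Prop) := wellFounded_lt
  set F : (c : O) → ((j : O) → j < c → ((γ → M) × (γ → M))) → ((γ → M) × (γ → M)) :=
    fun c w => Classical.epsilon (fun pr =>
      RealizesRes L M p (A ∪ ⋃ j, ⋃ h : j < c, (Set.range (w j h).1 ∪ Set.range (w j h).2))
        pr.1 ∧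
      ¬ RealizesRes L M p (A ∪ Set.range b) pr.1 ∧
      RealizesRes L M p (A ∪ Set.range b ∪
        (⋃ j, ⋃ h : j < c, (Set.range (w j h).1 ∪ Set.range (w j h).2)) ∪ Set.range pr.1)
        pr.2) with hF
  set ev : O → ((γ → M) × (γ → M)) := wfO.fix F with hev
  have hfix : ∀ c, ev c = F c (fun j _ => ev j) := fun c => wfO.fix_eq F c
  set PCv : O → Set M := fun c =>
    ⋃ j, ⋃ _h : j < c, (Set.range (ev j).1 ∪ Set.range (ev j).2) with hPCv
  set PRD : O → ((γ → M) × (γ → M)) → Prop := fun c pr =>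
    RealizesRes L M p (A ∪ PCv c) pr.1 ∧
    ¬ RealizesRes L M p (A ∪ Set.range b) pr.1 ∧
    RealizesRes L M p (A ∪ Set.range b ∪ PCv c ∪ Set.range pr.1) pr.2 with hPRD
  -- cardinality of initial segments of coordinates
  have hPCvsmall : ∀ c : O, #(PCv c) < κ := by
    intro c
    have heq : PCv c = ⋃ x : ↥(Set.Iio c), (Set.range (ev x.1).1 ∪ Set.range (ev x.1).2) := by
      ext m
      simp only [hPCv, Set.mem_iUnion]
      constructor
      · rintro ⟨j, hj, hm⟩
        exact ⟨⟨j, hj⟩, hm⟩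
      · rintro ⟨⟨j, hj⟩, hm⟩
        exact ⟨j, hj, hm⟩
    rw [heq]
    refine lt_of_le_of_lt (Cardinal.mk_iUnion_le _) ?_
    refine Cardinal.mul_lt_of_lt haleph.le (lt_of_le_of_lt (hIio c) hlamκ) ?_
    refine lt_of_le_of_lt (ciSup_le' (fun x => ?_)) (Cardinal.add_lt_of_lt haleph.le hγ hγ)
    exact le_trans (Cardinal.mk_union_le _ _)
      (add_le_add Cardinal.mk_range_le Cardinal.mk_range_le)
  -- the global interleaved sequence
  set eSeq : Lex (O × Bool) → γ → M := fun i =>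
    cond (ofLex i).2 ((ev (ofLex i).1).2) ((ev (ofLex i).1).1) with heSeq
  -- seqBefore computation for the full sequence
  have heSeqF : ∀ i : Lex (O × Bool), (ofLex i).2 = false → eSeq i = (ev (ofLex i).1).1 := by
    intro i h; simp only [heSeq, h, cond_false]
  have heSeqT : ∀ i : Lex (O × Bool), (ofLex i).2 = true → eSeq i = (ev (ofLex i).1).2 := by
    intro i h; simp only [heSeq, h, cond_true]
  have hSB : ∀ i : Lex (O × Bool),
      seqBefore M ((· < ·) : Lex (O × Bool) → Lex (O × Bool) → Prop) eSeq i =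
        PCv (ofLex i).1 ∪ (cond (ofLex i).2 (Set.range (ev (ofLex i).1).1) ∅) := by
    intro i
    ext m
    simp only [seqBefore, Set.mem_iUnion, Set.mem_setOf_eq, Set.mem_union]
    constructor
    · rintro ⟨i', hlt, hm⟩
      have hlt' : (ofLex i').1 < (ofLex i).1 ∨
          ((ofLex i').1 = (ofLex i).1 ∧ (ofLex i').2 < (ofLex i).2) :=
        Prod.Lex.lt_iff.mp hlt
      rcases hlt' with h | ⟨h1, h2⟩
      · left
        rw [hPCv]
        simp only [Set.mem_iUnion]
        refine ⟨(ofLex i').1, h, ?_⟩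
        rcases hx' : (ofLex i').2 with _ | _
        · left; rw [heSeqF i' hx'] at hm; exact hm
        · right; rw [heSeqT i' hx'] at hm; exact hm
      · right
        rcases Bool.lt_iff.1 h2 with ⟨hx'f, hxt⟩
        rw [hxt]
        rw [heSeqF i' hx'f, h1] at hm
        exact hm
    · rintro (hm | hm)
      · rw [hPCv] at hm
        simp only [Set.mem_iUnion] at hm
        obtain ⟨j', hj', hm⟩ := hm
        rcases hm with hm | hm
        · refine ⟨toLex (j', false), Prod.Lex.lt_iff.2 (Or.inl hj'), ?_⟩
          rw [heSeqF (toLex (j', false)) rfl]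
          exact hm
        · refine ⟨toLex (j', true), Prod.Lex.lt_iff.2 (Or.inl hj'), ?_⟩
          rw [heSeqT (toLex (j', true)) rfl]
          exact hm
      · rcases hx : (ofLex i).2 with _ | _
        · rw [hx] at hm; simp at hm
        · rw [hx] at hm
          refine ⟨toLex ((ofLex i).1, false),
            Prod.Lex.lt_iff.2 (Or.inr ⟨rfl, lt_of_lt_of_eq Bool.false_lt_true hx.symm⟩), ?_⟩
          rw [heSeqF (toLex ((ofLex i).1, false)) rfl]
          exact hm
  -- key facts
  have hPall : ∀ c, PRD c (ev c) := by
    intro c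
    refine wfO.induction (C := fun c => PRD c (ev c)) c ?_
    intro c IH
    -- the sequence so far is a Morley sequence
    set Ic := Lex ({j : O // j < c} × Bool) with hIc
    set ec : Ic → γ → M := fun i => eSeq (toLex (((ofLex i).1 : O), (ofLex i).2)) with hec
    have hecSB : ∀ i : Ic, seqBefore M ((· < ·) : Ic → Ic → Prop) ec i =
        seqBefore M ((· < ·) : Lex (O × Bool) → Lex (O × Bool) → Prop) eSeq
          (toLex (((ofLex i).1 : O), (ofLex i).2)) := by
      intro i
      ext m
      simp only [seqBefore, Set.mem_iUnion, Set.mem_setOf_eq]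
      constructor
      · rintro ⟨i', hlt, hm⟩
        refine ⟨toLex (((ofLex i').1 : O), (ofLex i').2), ?_, hm⟩
        have h := Prod.Lex.lt_iff.mp hlt
        refine Prod.Lex.lt_iff.2 ?_
        rcases h with h | ⟨h1, h2⟩
        · exact Or.inl h
        · exact Or.inr ⟨by rw [h1]; rfl, h2⟩
      · rintro ⟨i', hlt, hm⟩
        have h := Prod.Lex.lt_iff.mp hlt
        have hfst : (ofLex i').1 < c := by
          rcases h with h | ⟨h1, h2⟩
          · exact h.trans (ofLex i).1.2
          · rw [h1]; exact (ofLex i).1.2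
        refine ⟨toLex (⟨(ofLex i').1, hfst⟩, (ofLex i').2), ?_, hm⟩
        refine Prod.Lex.lt_iff.2 ?_
        rcases h with h | ⟨h1, h2⟩
        · exact Or.inl h
        · refine Or.inr ⟨?_, h2⟩
          exact Subtype.ext h1
    have hMorleyc : MorleySeqOver L M p A ((· < ·) : Ic → Ic → Prop) ec := by
      intro i
      rw [hecSB i, hSB]
      simp only [ofLex_toLex]
      rcases hx : (ofLex i).2 with _ | _
      · have hval : ec i = (ev ((ofLex i).1 : O)).1 := by
          rw [hec]
          exact heSeqF _ hx
        rw [hval]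
        simp only [cond_false, Set.union_empty]
        exact (IH ((ofLex i).1 : O) (ofLex i).1.2).1
      · have hval : ec i = (ev ((ofLex i).1 : O)).2 := by
          rw [hec]
          exact heSeqT _ hx
        rw [hval]
        simp only [cond_true]
        refine realizesRes_mono hglob ?_ (IH ((ofLex i).1 : O) (ofLex i).1.2).2.2
        intro m hm
        rcases hm with hm | hm
        · exact Or.inl (Or.inl (Or.inl hm))
        · rcases hm with hm | hm
          · exact Or.inl (Or.inr hm)
          · exact Or.inr hm
    have hUc : (⋃ i : Ic, Set.range (ec i)) = PCv c := by
      ext m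
      simp only [Set.mem_iUnion, hPCv]
      constructor
      · rintro ⟨i, hm⟩
        refine ⟨((ofLex i).1 : O), (ofLex i).1.2, ?_⟩
        rcases hx : (ofLex i).2 with _ | _
        · left
          have hval : ec i = (ev ((ofLex i).1 : O)).1 := by rw [hec]; exact heSeqF _ hx
          rwa [hval] at hm
        · right
          have hval : ec i = (ev ((ofLex i).1 : O)).2 := by rw [hec]; exact heSeqT _ hx
          rwa [hval] at hm
      · rintro ⟨j, hj, hm⟩
        rcases hm with hm | hm
        · refine ⟨toLex (⟨j, hj⟩, false), ?_⟩
          have hval : ec (toLex (⟨j, hj⟩, false)) = (ev j).1 := by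
            rw [hec]; exact heSeqF _ rfl
          rwa [hval]
        · refine ⟨toLex (⟨j, hj⟩, true), ?_⟩
          have hval : ec (toLex (⟨j, hj⟩, true)) = (ev j).2 := by
            rw [hec]; exact heSeqT _ rfl
          rwa [hval]
    obtain ⟨abad, habad1, habad2⟩ :=
      hgoal Ic ((· < ·) : Ic → Ic → Prop) inferInstance ec hMorleyc
    rw [hUc] at habad1
    have hsmall : #(A ∪ Set.range b ∪ PCv c ∪ Set.range abad : Set M) < κ := by
      refine lt_of_le_of_lt (Cardinal.mk_union_le _ _) (Cardinal.add_lt_of_lt haleph.le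
        (lt_of_le_of_lt (Cardinal.mk_union_le _ _) (Cardinal.add_lt_of_lt haleph.le
          (lt_of_le_of_lt (Cardinal.mk_union_le _ _) (Cardinal.add_lt_of_lt haleph.le hA
            (lt_of_le_of_lt Cardinal.mk_range_le hβ))) (hPCvsmall c)))
        (lt_of_le_of_lt Cardinal.mk_range_le hγ))
    obtain ⟨agood, hagood⟩ := realizesRes_exists κ hM hT hγ hglob _ hsmall
    have hEX : ∃ pr : ((γ → M) × (γ → M)), PRD c pr :=
      ⟨(abad, agood), habad1, habad2, hagood⟩
    rw [hPRD] at hEX ⊢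
    rw [hfix c]
    exact Classical.epsilon_spec hEX
  -- choose the failing formulas
  have hbadφ : ∀ c : O, ∃ ψ : Fml, (ψ.relabel (Sum.map Subtype.val id)) ∈ p ∧
      ¬ (ψ.relabel (Sum.map Subtype.val id)).Realize (Sum.elim id (ev c).1) := by
    intro c
    have h2 := (hPall c).2.1
    unfold RealizesRes at h2
    push_neg at h2
    obtain ⟨φ, hφp, hφov, hφn⟩ := h2
    obtain ⟨ψ, rfl⟩ := hφov
    exact ⟨ψ, hφp, hφn⟩
  choose ψf hψp hψn using hbadφ
  have hcount : #(Fml ⊕ ℕ) < #O := by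
    rw [hOcard]
    refine lt_of_le_of_lt ?_ (Order.lt_succ lam)
    rw [hlam]
    simp [Cardinal.mk_sum]
  haveI : Infinite (Fml ⊕ ℕ) := infinite_sum.mpr (Or.inr inferInstance)
  obtain ⟨a0, ha0⟩ := Cardinal.exists_infinite_fiber
    (fun c => (Sum.inl (ψf c) : Fml ⊕ ℕ)) hcount
  rcases a0 with ψ0 | n
  swap
  · obtain ⟨⟨c, hc⟩⟩ := (ha0 : Infinite _).nonempty
    simp only [Set.mem_preimage, Set.mem_singleton_iff] at hc
    exact absurd hc Sum.inl_ne_inr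
  set S : Set O := (fun c => (Sum.inl (ψf c) : Fml ⊕ ℕ)) ⁻¹' {Sum.inl ψ0} with hS
  haveI hSinf : Infinite ↥S := ha0
  have hSspec : ∀ c ∈ S, ψf c = ψ0 := by
    intro c hc
    simpa [hS] using hc
  set φ0 : L.Formula (M ⊕ γ) := ψ0.relabel (Sum.map Subtype.val id) with hφ0
  obtain ⟨⟨c0, hc0⟩⟩ := hSinf.nonempty
  have hφ0p : φ0 ∈ p := by
    have := hψp c0
    rwa [hSspec c0 hc0] at this
  have hφ0ov : FormulaOver L M (A ∪ Set.range b) φ0 := ⟨ψ0, rfl⟩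
  -- the full sequence is Morley over A
  have hMorleyFull : MorleySeqOver L M p A
      ((· < ·) : Lex (O × Bool) → Lex (O × Bool) → Prop) eSeq := by
    intro i
    rw [hSB]
    rcases hx : (ofLex i).2 with _ | _
    · rw [heSeqF i hx]
      simp only [cond_false, Set.union_empty]
      exact (hPall (ofLex i).1).1
    · rw [heSeqT i hx]
      simp only [cond_true]
      refine realizesRes_mono hglob ?_ (hPall (ofLex i).1).2.2
      intro m hm
      rcases hm with hm | hm
      · exact Or.inl (Or.inl (Or.inl hm))
      · rcases hm with hm | hm
        · exact Or.inl (Or.inr hm)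
        · exact Or.inr hm
  haveI : Infinite (Lex (O × Bool)) :=
    Infinite.of_injective (fun c : O => toLex (c, false))
      (fun a b h => congrArg Prod.fst (toLex.injective h))
  rcases hgs.2 (Lex (O × Bool)) ((· < ·)) inferInstance inferInstance eSeq hMorleyFull φ0
    with hfin | hfin
  · refine Set.infinite_of_injective_forall_mem
      (f := fun c : O => toLex (c, true)) (s := {i | φ0.Realize (Sum.elim id (eSeq i))})
      (fun a b h => congrArg Prod.fst (toLex.injective h)) ?_ hfin
    intro c
    have hgood := (hPall c).2.2
    have hgood' : RealizesRes L M p (A ∪ Set.range b) (ev c).2 := by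
      refine realizesRes_mono hglob ?_ hgood
      intro m hm
      rcases hm with hm | hm
      · exact Or.inl (Or.inl (Or.inl hm))
      · exact Or.inl (Or.inl (Or.inr hm))
    have hval : eSeq (toLex (c, true)) = (ev c).2 := heSeqT _ rfl
    simp only [Set.mem_setOf_eq, hval]
    exact hgood' φ0 hφ0p hφ0ov
  · refine Set.infinite_of_injective_forall_mem
      (f := fun c : ↥S => toLex ((c : O), false))
      (s := {i | ¬ φ0.Realize (Sum.elim id (eSeq i))})
      (fun a b h => Subtype.ext (congrArg Prod.fst (toLex.injective h))) ?_ hfin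
    rintro ⟨c, hc⟩
    have hn := hψn c
    rw [hSspec c hc] at hn
    have hval : eSeq (toLex (c, false)) = (ev c).1 := heSeqF _ rfl
    simp only [Set.mem_setOf_eq, hval]
    exact hn
end Paper
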